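/- Let D be a division ring with center F, let K be a division subring of D containing F, and let a ∈ D. Suppose α_1, …, α_n are pairwise distinct elements of F such that a − α_i ≠ 0 for every i. Then either a is right algebraic over K, or the set {(a − α_1)^{-1}, …, (a − α_n)^{-1}} is right linearly independent over K (i.e., whenever β_1, …, β_n ∈ K satisfy (a − α_1)^{-1}β_1 + ⋯ + (a − α_n)^{-1}β_n = 0, all β_i = 0). -/

import Mathlib

open Polynomial Finset


/-- `a` is right algebraic over the division subring `K` of `D`:
there are coefficients `a_0, …, a_m ∈ K`, not all zero, with
`a_0 + a·a_1 + ⋯ + a^m·a_m = 0` (coefficients written on the right). -/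
def IsRightAlgebraicOver {D : Type*} [DivisionRing D] (K : Subring D) (a : D) : Prop :=
  ∃ (m : ℕ) (c : ℕ → D), (∀ i, c i ∈ K) ∧ (∃ i ≤ m, c i ≠ 0) ∧
    ∑ i ∈ Finset.range (m + 1), a ^ i * c i = 0

/-- Let `D` be a division ring with center `F`, `K` a division subring of `D` containing `F`,
and `a ∈ D`.  If `α_1, …, α_n` are pairwise distinct central elements with `a - α_i ≠ 0`
for all `i`, then either `a` is right algebraic over `K` or the family
`{(a - α_i)⁻¹}` is right linearly independent over `K`. -/
theorem right_algebraic_or_inverses_right_linearIndependent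
    {D : Type*} [DivisionRing D] (K : Subring D)
    (hKinv : ∀ x ∈ K, x⁻¹ ∈ K) (hFK : Subring.center D ≤ K)
    (a : D) (n : ℕ) (α : Fin n → D) (hαF : ∀ i, α i ∈ Subring.center D)
    (hα : Function.Injective α) (ha : ∀ i, a - α i ≠ 0) :
    IsRightAlgebraicOver K a ∨
      ∀ β : Fin n → D, (∀ i, β i ∈ K) →
        ∑ i, (a - α i)⁻¹ * β i = 0 → ∀ i, β i = 0 := by
  by_cases hli : ∀ β : Fin n → D, (∀ i, β i ∈ K) →
      ∑ i, (a - α i)⁻¹ * β i = 0 → ∀ i, β i = 0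
  · exact Or.inr hli
  · left
    unfold IsRightAlgebraicOver
    push_neg at hli
    obtain ⟨β, hβK, hsum, i0, hi0⟩ := hli
    set R := Subring.center D with hR
    let f : R →+* D := R.subtype
    have hcomm : ∀ (r : R) (x : D), Commute (f r) x := fun r x =>
      (Subring.mem_center_iff.mp r.2 x).symm
    let α' : Fin n → R := fun i => ⟨α i, hαF i⟩
    have hα' : ∀ i j, i ≠ j → α' i - α' j ≠ 0 := by
      intro i j hij h
      exact hij (hα (by simpa [α', Subtype.ext_iff, sub_eq_zero] using h))
    let Q : Fin n → R[X] := fun i => ∏ j ∈ univ.erase i, (X - C (α' j))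
    have hdeg : ∀ i, (Q i).natDegree < n + 1 := by
      intro i
      have h1 : (Q i).natDegree ≤ ∑ j ∈ univ.erase i, (X - C (α' j)).natDegree :=
        Polynomial.natDegree_prod_le _ _
      have h2 : ∑ j ∈ univ.erase i, (X - C (α' j)).natDegree
          = (univ.erase i).card := by
        simp [Polynomial.natDegree_X_sub_C]
      have h3 : (univ.erase i).card ≤ n := by
        simp [Finset.card_erase_of_mem]
      omega
    let c : ℕ → D := fun k => ∑ i, f ((Q i).coeff k) * β i
    have key : ∀ x : D, ∑ k ∈ Finset.range (n+1), x ^ k * c k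
        = ∑ i, Polynomial.eval₂ f x (Q i) * β i := by
      intro x
      simp only [c, Finset.mul_sum]
      rw [Finset.sum_comm]
      refine Finset.sum_congr rfl fun i _ => ?_
      rw [Polynomial.eval₂_eq_sum_range' f (hdeg i) x, Finset.sum_mul]
      refine Finset.sum_congr rfl fun k _ => ?_
      rw [((hcomm ((Q i).coeff k) x).pow_right k).eq, mul_assoc]
    -- step 1 : the linear relation gives a relation among the Q's
    let E : R[X] →+* D := Polynomial.eval₂RingHom' f a (fun r => hcomm r a)
    have hE : ∀ p : R[X], E p = Polynomial.eval₂ f a p := fun p => rfl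
    have h1 : ∑ i, Polynomial.eval₂ f a (Q i) * β i = 0 := by
      have hT : ∀ i : Fin n, E (∏ j, (X - C (α' j))) =
          Polynomial.eval₂ f a (Q i) * (a - α i) := by
        intro i
        rw [← Finset.prod_erase_mul univ _ (Finset.mem_univ i), map_mul]
        simp [hE, E, Q, f]
        exact Or.inl rfl
      have := congrArg (fun z => E (∏ j, (X - C (α' j))) * z) hsum
      simp only [Finset.mul_sum, mul_zero] at this
      rw [← this]
      refine Finset.sum_congr rfl fun i _ => ?_
      rw [hT i, mul_assoc, ← mul_assoc (a - α i) (a - α i)⁻¹ (β i),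
        mul_inv_cancel₀ (ha i), one_mul]

    have hmain : ∑ k ∈ Finset.range (n + 1), a ^ k * c k = 0 := by
      rw [key a, h1]
    have hcK : ∀ k, c k ∈ K := by
      intro k
      exact K.sum_mem fun i _ => K.mul_mem (hFK ((Q i).coeff k).2) (hβK i)
    refine ⟨n, c, hcK, ?_, hmain⟩
    by_contra hc
    push_neg at hc
    have hczero : ∀ k, c k = 0 := by
      intro k
      by_cases hk : k ≤ n
      · exact hc k hk
      · refine Finset.sum_eq_zero fun i _ => ?_
        rw [Polynomial.coeff_eq_zero_of_natDegree_lt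
          (lt_of_lt_of_le (hdeg i) (by omega)), map_zero, zero_mul]
    -- evaluate at α i0
    have h2 : ∑ i, Polynomial.eval₂ f (α i0) (Q i) * β i = 0 := by
      rw [← key (α i0)]
      exact Finset.sum_eq_zero fun k _ => by rw [hczero k, mul_zero]
    have h3 : ∀ i, Polynomial.eval₂ f (α i0) (Q i) = f ((Q i).eval (α' i0)) := by
      intro i
      exact Polynomial.eval₂_at_apply f (α' i0)
    have hvanish : ∀ i ∈ (univ : Finset (Fin n)), i ≠ i0 → (Q i).eval (α' i0) = 0 := by
      intro i _ hne
      rw [Polynomial.eval_prod]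
      refine Finset.prod_eq_zero (Finset.mem_erase.mpr ⟨fun h => hne h.symm, Finset.mem_univ i0⟩) ?_
      simp
    have h4 : f ((Q i0).eval (α' i0)) * β i0 = 0 := by
      have e1 : ∑ i, f ((Q i).eval (α' i0)) * β i = f ((Q i0).eval (α' i0)) * β i0 :=
        Finset.sum_eq_single_of_mem i0 (Finset.mem_univ i0) fun i _ hne => by
          rw [hvanish i (Finset.mem_univ i) hne, map_zero, zero_mul]
      rw [← e1,
        show (∑ i, f ((Q i).eval (α' i0)) * β i) = ∑ i, Polynomial.eval₂ f (α i0) (Q i) * β i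
          from Finset.sum_congr rfl fun i _ => by rw [h3]]
      exact h2
    have h5 : (Q i0).eval (α' i0) ≠ 0 := by
      rw [Polynomial.eval_prod]
      refine Finset.prod_ne_zero_iff.mpr fun j hj => ?_
      simp only [Polynomial.eval_sub, Polynomial.eval_X, Polynomial.eval_C]
      exact hα' i0 j (fun h => (Finset.mem_erase.mp hj).1 h.symm)
    have h6 : f ((Q i0).eval (α' i0)) ≠ 0 := by
      simpa [f, Subring.coe_eq_zero_iff] using h5
    exact hi0 ((mul_eq_zero.mp h4).resolve_left h6)
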